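/- For every integer n ≥ 0, the number of tuples (α₁, α₂, α₃, α₄, α₅, β) ∈ ℤ⁶ such that all eight integers β, −α₁+β, α₁−α₂+β, α₂−α₃+β, α₃−α₄−β, α₄−α₅−β, α₅−β, −β have absolute value at most n equals (2n+1)·A_5^b(n); in particular 5·E_6^b(n) = (2n+1)²(5 + 27n + 71n² + 88n³ + 44n⁴), where E_6^b(n) denotes this count. -/

import Mathlib

/-- `Akb k n` : the number of vectors `p ∈ ℤ^(k+1)` with `|p i| ≤ n` for all `i`
and zero coordinate sum (bulk count for the `A_k` lattice). -/
noncomputable def Akb (k n : ℕ) : ℕ :=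
  Nat.card {p : Fin (k + 1) → ℤ // (∀ i, |p i| ≤ (n : ℤ)) ∧ ∑ i, p i = 0}

/-- `E6b n` : the number of integer-coordinate points of the `E₆` lattice whose
eight Cartesian coordinates all have absolute value at most `n`, parametrized by
tuples `(α₁, α₂, α₃, α₄, α₅, β) ∈ ℤ⁶`. -/
noncomputable def E6b (n : ℕ) : ℕ :=
  Nat.card {t : ℤ × ℤ × ℤ × ℤ × ℤ × ℤ //
    |t.2.2.2.2.2| ≤ (n : ℤ) ∧
    |-t.1 + t.2.2.2.2.2| ≤ (n : ℤ) ∧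
    |t.1 - t.2.1 + t.2.2.2.2.2| ≤ (n : ℤ) ∧
    |t.2.1 - t.2.2.1 + t.2.2.2.2.2| ≤ (n : ℤ) ∧
    |t.2.2.1 - t.2.2.2.1 - t.2.2.2.2.2| ≤ (n : ℤ) ∧
    |t.2.2.2.1 - t.2.2.2.2.1 - t.2.2.2.2.2| ≤ (n : ℤ) ∧
    |t.2.2.2.2.1 - t.2.2.2.2.2| ≤ (n : ℤ) ∧
    |-t.2.2.2.2.2| ≤ (n : ℤ)}

section E6aux
open Finset
lemma Icc_ins (m : ℤ) (h : 0 ≤ m) : Finset.Icc (0:ℤ) (m+1) = insert (m+1) (Finset.Icc 0 m) := by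
  ext x; simp [Finset.mem_Icc]; omega

lemma sumQuartic (a b c d e : ℤ) (m : ℤ) (hm : 0 ≤ m) :
    60 * ∑ s ∈ Finset.Icc (0:ℤ) m, (a + b*s + c*s^2 + d*s^3 + e*s^4) =
    60*a*(m+1) + 30*b*m*(m+1) + 10*c*m*(m+1)*(2*m+1) + 15*d*m^2*(m+1)^2
      + 2*e*m*(m+1)*(2*m+1)*(3*m^2+3*m-1) := by
  refine Int.le_induction (motive := fun m _ => 60 * ∑ s ∈ Finset.Icc (0:ℤ) m, (a + b*s + c*s^2 + d*s^3 + e*s^4) =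
    60*a*(m+1) + 30*b*m*(m+1) + 10*c*m*(m+1)*(2*m+1) + 15*d*m^2*(m+1)^2
      + 2*e*m*(m+1)*(2*m+1)*(3*m^2+3*m-1)) ?_ ?_ m hm
  · norm_num
  · intro k hk ih
    rw [Icc_ins k hk, Finset.sum_insert (by simp [Finset.mem_Icc])]
    linear_combination ih

lemma sumLin (p q lo : ℤ) : ∀ (m : ℤ), 0 ≤ m → ∀ hi', hi' = lo - 1 + m →
    2 * ∑ s ∈ Finset.Icc lo hi', (p + q * s) = (hi' + 1 - lo) * (2 * p + q * (lo + hi')) := by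
  intro m hm
  refine Int.le_induction (motive := fun m _ => ∀ hi', hi' = lo - 1 + m →
    2 * ∑ s ∈ Finset.Icc lo hi', (p + q * s) = (hi' + 1 - lo) * (2 * p + q * (lo + hi'))) ?_ ?_ m hm
  · intro hi' h'
    rw [h', show lo - 1 + 0 = lo - 1 by ring, Finset.Icc_eq_empty (by omega)]
    simp
  · intro k hk ih hi' h'
    have hins : Finset.Icc lo hi' = insert hi' (Finset.Icc lo (lo - 1 + k)) := by
      ext x; simp [Finset.mem_Icc]; omega
    rw [hins, Finset.sum_insert (by simp [Finset.mem_Icc]; omega), mul_add, ih _ rfl]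
    subst h'; ring

lemma sumLin' (p q lo hi : ℤ) (h : lo - 1 ≤ hi) :
    2 * ∑ s ∈ Finset.Icc lo hi, (p + q * s) = (hi + 1 - lo) * (2 * p + q * (lo + hi)) :=
  sumLin p q lo (hi - (lo - 1)) (by omega) hi (by ring)

noncomputable def BI (n : ℕ) : Finset ℤ := Finset.Icc (-(n:ℤ)) n

noncomputable def UU (n : ℕ) (t : ℤ) : ℤ := ∑ b ∈ BI n, ∑ c ∈ BI n, if b + c = t then 1 else 0

noncomputable def TT (n : ℕ) (s : ℤ) : ℤ := ∑ a ∈ BI n, ∑ b ∈ BI n, ∑ c ∈ BI n, if a + b + c = s then 1 else 0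

lemma U_card (n : ℕ) (t : ℤ) :
    UU n t = ((min (n:ℤ) (t+n) + 1 - max (-(n:ℤ)) (t-n)).toNat : ℤ) := by
  have h1 : ∀ b : ℤ, (∑ c ∈ BI n, if b + c = t then (1:ℤ) else 0)
      = if b ∈ Finset.Icc (t-(n:ℤ)) (t+n) then 1 else 0 := by
    intro b
    rw [show (fun c => if b + c = t then (1:ℤ) else 0) = fun c => if c = t - b then 1 else 0 from
      funext fun c => by congr 1; simp; constructor <;> intro h <;> omega]
    rw [Finset.sum_ite_eq' (BI n) (t - b) (fun _ => 1)]
    congr 1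
    simp [BI, Finset.mem_Icc]
    omega
  unfold UU
  simp only [h1]
  rw [Finset.sum_ite_mem]
  have h2 : BI n ∩ Finset.Icc (t-(n:ℤ)) (t+n)
      = Finset.Icc (max (-(n:ℤ)) (t-n)) (min (n:ℤ) (t+n)) := by
    ext x; simp [BI, Finset.mem_Icc]; omega
  rw [h2]
  simp [Int.card_Icc]

lemma T_eq (n : ℕ) (s : ℤ) : TT n s = ∑ a ∈ BI n, UU n (s - a) := by
  unfold TT UU
  refine Finset.sum_congr rfl fun a _ => ?_
  refine Finset.sum_congr rfl fun b _ => Finset.sum_congr rfl fun c _ => ?_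
  congr 1
  exact propext ⟨fun h => by omega, fun h => by omega⟩

lemma U_symm (n : ℕ) (t : ℤ) : UU n (-t) = UU n t := by
  rw [U_card, U_card]; congr 1; omega

lemma T_symm (n : ℕ) (s : ℤ) : TT n (-s) = TT n s := by
  rw [T_eq, T_eq]
  refine Finset.sum_nbij' (fun a => -a) (fun a => -a) ?_ ?_ ?_ ?_ ?_
  · intro a ha; simp [BI, Finset.mem_Icc] at *; omega
  · intro a ha; simp [BI, Finset.mem_Icc] at *; omega
  · intro a _; ring
  · intro a _; ring
  · intro a _
    rw [show -s - a = -(s - -a) by ring, U_symm]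
lemma Tval1 (n : ℕ) (s : ℤ) (h0 : 0 ≤ s) (h1 : s ≤ n) :
    TT n s = 3*(n:ℤ)^2 + 3*n + 1 - s^2 := by
  have hsplit : BI n = Finset.Icc (-(n:ℤ)) s ∪ Finset.Icc (s+1) (n:ℤ) := by
    ext x; simp [BI, Finset.mem_Icc]; omega
  have hdisj : Disjoint (Finset.Icc (-(n:ℤ)) s) (Finset.Icc (s+1) (n:ℤ)) := by
    rw [Finset.disjoint_left]; intro x hx hx'
    simp [Finset.mem_Icc] at hx hx'; omega
  have e1 : ∑ a ∈ Finset.Icc (-(n:ℤ)) s, UU n (s - a)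
      = ∑ a ∈ Finset.Icc (-(n:ℤ)) s, ((2*(n:ℤ)+1-s) + 1 * a) := by
    refine Finset.sum_congr rfl fun a ha => ?_
    simp [Finset.mem_Icc] at ha
    rw [U_card]; omega
  have e2 : ∑ a ∈ Finset.Icc (s+1) (n:ℤ), UU n (s - a)
      = ∑ a ∈ Finset.Icc (s+1) (n:ℤ), ((2*(n:ℤ)+1+s) + (-1) * a) := by
    refine Finset.sum_congr rfl fun a ha => ?_
    simp [Finset.mem_Icc] at ha
    rw [U_card]; omega
  have g1 := sumLin' (2*(n:ℤ)+1-s) 1 (-(n:ℤ)) s (by omega)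
  have g2 := sumLin' (2*(n:ℤ)+1+s) (-1) (s+1) (n:ℤ) (by omega)
  have key : 2 * TT n s = 2 * (3*(n:ℤ)^2 + 3*n + 1 - s^2) := by
    rw [T_eq, hsplit, Finset.sum_union hdisj, e1, e2]
    linear_combination g1 + g2
  exact mul_left_cancel₀ two_ne_zero key

lemma Tval2 (n : ℕ) (s : ℤ) (h0 : (n:ℤ) < s) (h1 : s ≤ 3*n) :
    2 * TT n s = (3*(n:ℤ)+1-s) * (3*n+2-s) := by
  have hsplit : BI n = Finset.Icc (-(n:ℤ)) (s-2*n-1) ∪ Finset.Icc (s-2*n) (n:ℤ) := by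
    ext x; simp [BI, Finset.mem_Icc]; omega
  have hdisj : Disjoint (Finset.Icc (-(n:ℤ)) (s-2*n-1)) (Finset.Icc (s-2*n) (n:ℤ)) := by
    rw [Finset.disjoint_left]; intro x hx hx'
    simp [Finset.mem_Icc] at hx hx'; omega
  have e1 : ∑ a ∈ Finset.Icc (-(n:ℤ)) (s-2*n-1), UU n (s - a) = 0 := by
    refine Finset.sum_eq_zero fun a ha => ?_
    simp [Finset.mem_Icc] at ha
    rw [U_card]; omega
  have e2 : ∑ a ∈ Finset.Icc (s-2*n) (n:ℤ), UU n (s - a)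
      = ∑ a ∈ Finset.Icc (s-2*n) (n:ℤ), ((2*(n:ℤ)+1-s) + 1 * a) := by
    refine Finset.sum_congr rfl fun a ha => ?_
    simp [Finset.mem_Icc] at ha
    rw [U_card]; omega
  have g2 := sumLin' (2*(n:ℤ)+1-s) 1 (s-2*n) (n:ℤ) (by omega)
  rw [T_eq, hsplit, Finset.sum_union hdisj, e1, e2]
  linear_combination g2

lemma sum6 (p : Fin (5 + 1) → ℤ) : ∑ i, p i = p 0 + p 1 + p 2 + p 3 + p 4 + p 5 := by
  exact Fin.sum_univ_six (f := fun i : Fin 6 => p i)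

lemma collapse (n : ℕ) (F : ℤ → ℤ) :
    ∑ s ∈ Finset.Icc (-(3*(n:ℤ))) (3*n), TT n s * F s
      = ∑ a ∈ BI n, ∑ b ∈ BI n, ∑ c ∈ BI n, F (a + b + c) := by
  unfold TT
  simp only [Finset.sum_mul, ite_mul, one_mul, zero_mul]
  rw [Finset.sum_comm]
  refine Finset.sum_congr rfl fun a ha => ?_
  rw [Finset.sum_comm]
  refine Finset.sum_congr rfl fun b hb => ?_
  rw [Finset.sum_comm]
  refine Finset.sum_congr rfl fun c hc => ?_
  rw [Finset.sum_ite_eq]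
  rw [if_pos]
  simp [BI, Finset.mem_Icc] at ha hb hc ⊢
  omega

def e6 : (Fin 6 → ℤ) ≃ (ℤ × ℤ × ℤ × ℤ × ℤ × ℤ) where
  toFun p := (p 0, p 1, p 2, p 3, p 4, p 5)
  invFun t := ![t.1, t.2.1, t.2.2.1, t.2.2.2.1, t.2.2.2.2.1, t.2.2.2.2.2]
  left_inv p := by funext i; fin_cases i <;> rfl
  right_inv t := rfl

lemma Akb_card (n : ℕ) :
    (Akb 5 n : ℤ) = ∑ a ∈ BI n, ∑ b ∈ BI n, ∑ c ∈ BI n, TT n (-(a + b + c)) := by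
  classical
  set P6 : Finset (ℤ × ℤ × ℤ × ℤ × ℤ × ℤ) :=
    (BI n ×ˢ BI n ×ˢ BI n ×ˢ BI n ×ˢ BI n ×ˢ BI n).filter
      (fun t => t.1 + t.2.1 + t.2.2.1 + t.2.2.2.1 + t.2.2.2.2.1 + t.2.2.2.2.2 = 0) with hP6
  have h1 : Akb 5 n = P6.card := by
    rw [Akb, Nat.card_congr (Equiv.subtypeEquiv e6 (fun p => ?_)), Nat.card_eq_finsetCard]
    simp only [hP6, Finset.mem_filter, Finset.mem_product, BI, Finset.mem_Icc, abs_le,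
      sum6, e6, Equiv.coe_fn_mk]
    constructor
    · rintro ⟨h, hs⟩; exact ⟨⟨h 0, h 1, h 2, h 3, h 4, h 5⟩, hs⟩
    · rintro ⟨⟨h0, h1, h2, h3, h4, h5⟩, hs⟩
      exact ⟨fun i => by fin_cases i <;> assumption, hs⟩
  rw [h1, hP6, Finset.card_filter]
  push_cast
  simp only [Finset.sum_product]
  refine Finset.sum_congr rfl fun a _ => Finset.sum_congr rfl fun b _ =>
    Finset.sum_congr rfl fun c _ => ?_
  unfold TT
  refine Finset.sum_congr rfl fun d _ => Finset.sum_congr rfl fun e _ =>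
    Finset.sum_congr rfl fun f _ => ?_
  congr 1
  exact propext ⟨fun h => by omega, fun h => by omega⟩

lemma Akb_poly (n : ℕ) : 240 * (Akb 5 n : ℤ) =
    48 * (2*(n:ℤ)+1) * (5 + 27*n + 71*(n:ℤ)^2 + 88*(n:ℤ)^3 + 44*(n:ℤ)^4) := by
  set N : ℤ := (n : ℤ) with hN
  have hN0 : 0 ≤ N := by positivity
  have hX : (Akb 5 n : ℤ) = ∑ s ∈ Finset.Icc (-(3*N)) (3*N), TT n s * TT n (-s) := by
    rw [Akb_card]
    exact (collapse n (fun s => TT n (-s))).symm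
  have hX2 : (Akb 5 n : ℤ) = ∑ s ∈ Finset.Icc (-(3*N)) (3*N), TT n s * TT n s := by
    rw [hX]; exact Finset.sum_congr rfl fun s _ => by rw [T_symm]
  -- split the interval
  have hsp1 : Finset.Icc (-(3*N)) (3*N)
      = Finset.Icc (-(3*N)) (-1) ∪ Finset.Icc 0 (3*N) := by
    ext x; simp [Finset.mem_Icc]; omega
  have hd1 : Disjoint (Finset.Icc (-(3*N)) (-1)) (Finset.Icc (0:ℤ) (3*N)) := by
    rw [Finset.disjoint_left]; intro x hx hx'
    simp [Finset.mem_Icc] at hx hx'; omega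
  have hneg : ∑ s ∈ Finset.Icc (-(3*N)) (-1), TT n s * TT n s
      = ∑ s ∈ Finset.Icc 1 (3*N), TT n s * TT n s := by
    refine Finset.sum_nbij' (fun s => -s) (fun s => -s) ?_ ?_ ?_ ?_ ?_
    · intro s hs; simp [Finset.mem_Icc] at *; omega
    · intro s hs; simp [Finset.mem_Icc] at *; omega
    · intro s _; ring
    · intro s _; ring
    · intro s _; rw [T_symm]
  have hz : ∑ s ∈ Finset.Icc (0:ℤ) (3*N), TT n s * TT n s
      = TT n 0 * TT n 0 + ∑ s ∈ Finset.Icc 1 (3*N), TT n s * TT n s := by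
    rw [show Finset.Icc (0:ℤ) (3*N) = insert 0 (Finset.Icc 1 (3*N)) from by
      ext x; simp [Finset.mem_Icc]; omega]
    rw [Finset.sum_insert (by simp [Finset.mem_Icc])]
  have hsp2 : ∑ s ∈ Finset.Icc (1:ℤ) (3*N), TT n s * TT n s
      = ∑ s ∈ Finset.Icc (1:ℤ) N, TT n s * TT n s
        + ∑ s ∈ Finset.Icc (N+1) (3*N), TT n s * TT n s := by
    rw [show Finset.Icc (1:ℤ) (3*N) = Finset.Icc (1:ℤ) N ∪ Finset.Icc (N+1) (3*N) from by
      ext x; simp [Finset.mem_Icc]; omega]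
    refine Finset.sum_union ?_
    rw [Finset.disjoint_left]; intro x hx hx'
    simp [Finset.mem_Icc] at hx hx'; omega
  have hT0 : TT n 0 = 3*N^2 + 3*N + 1 := by
    have := Tval1 n 0 le_rfl hN0
    simpa using this
  -- piece 1
  have hc1 : ∑ s ∈ Finset.Icc (1:ℤ) N, TT n s * TT n s
      = ∑ s ∈ Finset.Icc (1:ℤ) N,
          ((3*N^2+3*N+1)^2 + 0*s + (-(2*(3*N^2+3*N+1)))*s^2 + 0*s^3 + 1*s^4) := by
    refine Finset.sum_congr rfl fun s hs => ?_
    simp only [Finset.mem_Icc] at hs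
    rw [Tval1 n s (by omega) hs.2]; ring
  have hins1 : ∑ s ∈ Finset.Icc (0:ℤ) N,
          ((3*N^2+3*N+1)^2 + 0*s + (-(2*(3*N^2+3*N+1)))*s^2 + 0*s^3 + 1*s^4)
      = ((3*N^2+3*N+1)^2 + 0*(0:ℤ) + (-(2*(3*N^2+3*N+1)))*0^2 + 0*0^3 + 1*0^4)
        + ∑ s ∈ Finset.Icc (1:ℤ) N,
          ((3*N^2+3*N+1)^2 + 0*s + (-(2*(3*N^2+3*N+1)))*s^2 + 0*s^3 + 1*s^4) := by
    rw [show Finset.Icc (0:ℤ) N = insert 0 (Finset.Icc 1 N) from by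
      ext x; simp [Finset.mem_Icc]; omega]
    rw [Finset.sum_insert (by simp [Finset.mem_Icc])]
  have hq1 := sumQuartic ((3*N^2+3*N+1)^2) 0 (-(2*(3*N^2+3*N+1))) 0 1 N hN0
  -- piece 2
  have hc2 : 4 * ∑ s ∈ Finset.Icc (N+1) (3*N), TT n s * TT n s
      = ∑ s ∈ Finset.Icc (N+1) (3*N),
          (((3*N+1)*(3*N+2))^2 + (-(2*((3*N+1)*(3*N+2))*(6*N+3)))*s
            + ((6*N+3)^2+2*((3*N+1)*(3*N+2)))*s^2 + (-(2*(6*N+3)))*s^3 + 1*s^4) := by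
    rw [Finset.mul_sum]
    refine Finset.sum_congr rfl fun s hs => ?_
    simp only [Finset.mem_Icc] at hs
    have h2 := Tval2 n s (by omega) (by omega)
    linear_combination (2 * TT n s + (3*N+1-s)*(3*N+2-s)) * h2
  have hsp3 : ∑ s ∈ Finset.Icc (0:ℤ) (3*N),
          (((3*N+1)*(3*N+2))^2 + (-(2*((3*N+1)*(3*N+2))*(6*N+3)))*s
            + ((6*N+3)^2+2*((3*N+1)*(3*N+2)))*s^2 + (-(2*(6*N+3)))*s^3 + 1*s^4)
      = ∑ s ∈ Finset.Icc (0:ℤ) N,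
          (((3*N+1)*(3*N+2))^2 + (-(2*((3*N+1)*(3*N+2))*(6*N+3)))*s
            + ((6*N+3)^2+2*((3*N+1)*(3*N+2)))*s^2 + (-(2*(6*N+3)))*s^3 + 1*s^4)
        + ∑ s ∈ Finset.Icc (N+1) (3*N),
          (((3*N+1)*(3*N+2))^2 + (-(2*((3*N+1)*(3*N+2))*(6*N+3)))*s
            + ((6*N+3)^2+2*((3*N+1)*(3*N+2)))*s^2 + (-(2*(6*N+3)))*s^3 + 1*s^4) := by
    rw [show Finset.Icc (0:ℤ) (3*N) = Finset.Icc (0:ℤ) N ∪ Finset.Icc (N+1) (3*N) from by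
      ext x; simp [Finset.mem_Icc]; omega]
    refine Finset.sum_union ?_
    rw [Finset.disjoint_left]; intro x hx hx'
    simp [Finset.mem_Icc] at hx hx'; omega
  have hq2 := sumQuartic (((3*N+1)*(3*N+2))^2) (-(2*((3*N+1)*(3*N+2))*(6*N+3)))
      ((6*N+3)^2+2*((3*N+1)*(3*N+2))) (-(2*(6*N+3))) 1 (3*N) (by omega)
  have hq3 := sumQuartic (((3*N+1)*(3*N+2))^2) (-(2*((3*N+1)*(3*N+2))*(6*N+3)))
      ((6*N+3)^2+2*((3*N+1)*(3*N+2))) (-(2*(6*N+3))) 1 N hN0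
  rw [hX2, hsp1, Finset.sum_union hd1, hneg, hz, hsp2, hT0]
  linear_combination 480 * hc1 - 480 * hins1 + 8 * hq1 + 120 * hc2 - 120 * hsp3 + 2 * hq2 - 2 * hq3

def E6equiv (n : ℕ) : {t : ℤ × ℤ × ℤ × ℤ × ℤ × ℤ //
    |t.2.2.2.2.2| ≤ (n : ℤ) ∧
    |-t.1 + t.2.2.2.2.2| ≤ (n : ℤ) ∧
    |t.1 - t.2.1 + t.2.2.2.2.2| ≤ (n : ℤ) ∧
    |t.2.1 - t.2.2.1 + t.2.2.2.2.2| ≤ (n : ℤ) ∧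
    |t.2.2.1 - t.2.2.2.1 - t.2.2.2.2.2| ≤ (n : ℤ) ∧
    |t.2.2.2.1 - t.2.2.2.2.1 - t.2.2.2.2.2| ≤ (n : ℤ) ∧
    |t.2.2.2.2.1 - t.2.2.2.2.2| ≤ (n : ℤ) ∧
    |-t.2.2.2.2.2| ≤ (n : ℤ)} ≃
    {b : ℤ // |b| ≤ (n : ℤ)} ×
      {p : Fin 6 → ℤ // (∀ i, |p i| ≤ (n : ℤ)) ∧ ∑ i, p i = 0} where
  toFun t := ⟨⟨t.1.2.2.2.2.2, t.2.1⟩,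
    ⟨![-t.1.1 + t.1.2.2.2.2.2,
       t.1.1 - t.1.2.1 + t.1.2.2.2.2.2,
       t.1.2.1 - t.1.2.2.1 + t.1.2.2.2.2.2,
       t.1.2.2.1 - t.1.2.2.2.1 - t.1.2.2.2.2.2,
       t.1.2.2.2.1 - t.1.2.2.2.2.1 - t.1.2.2.2.2.2,
       t.1.2.2.2.2.1 - t.1.2.2.2.2.2], by
      obtain ⟨⟨a1, a2, a3, a4, a5, b⟩, h1, h2, h3, h4, h5, h6, h7, h8⟩ := t
      refine ⟨fun i => ?_, ?_⟩
      · fin_cases i <;> simpa using ‹_›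
      · rw [sum6]
        show (-a1 + b) + (a1 - a2 + b) + (a2 - a3 + b) + (a3 - a4 - b) + (a4 - a5 - b)
          + (a5 - b) = 0
        ring⟩⟩
  invFun x := ⟨(x.1.1 - x.2.1 0,
             2*x.1.1 - x.2.1 0 - x.2.1 1,
             3*x.1.1 - x.2.1 0 - x.2.1 1 - x.2.1 2,
             2*x.1.1 - x.2.1 0 - x.2.1 1 - x.2.1 2 - x.2.1 3,
             x.1.1 - x.2.1 0 - x.2.1 1 - x.2.1 2 - x.2.1 3 - x.2.1 4,
             x.1.1), by
    obtain ⟨⟨b, hb⟩, ⟨p, hp, hs⟩⟩ := x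
    have hs6 : p 0 + p 1 + p 2 + p 3 + p 4 + p 5 = 0 := by rw [← sum6]; exact hs
    simp only
    refine ⟨hb, ?_, ?_, ?_, ?_, ?_, ?_, ?_⟩
    · rw [show -(b - p 0) + b = p 0 by ring]; exact hp 0
    · rw [show (b - p 0) - (2*b - p 0 - p 1) + b = p 1 by ring]; exact hp 1
    · rw [show (2*b - p 0 - p 1) - (3*b - p 0 - p 1 - p 2) + b = p 2 by ring]; exact hp 2
    · rw [show (3*b - p 0 - p 1 - p 2) - (2*b - p 0 - p 1 - p 2 - p 3) - b = p 3 by ring]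
      exact hp 3
    · rw [show (2*b - p 0 - p 1 - p 2 - p 3) - (b - p 0 - p 1 - p 2 - p 3 - p 4) - b = p 4 by ring]
      exact hp 4
    · rw [show (b - p 0 - p 1 - p 2 - p 3 - p 4) - b = p 5 by linarith]; exact hp 5
    · simpa using hb⟩
  left_inv t := by
    obtain ⟨⟨a1, a2, a3, a4, a5, b⟩, h⟩ := t
    apply Subtype.ext
    simp only [Matrix.cons_val_zero, Matrix.cons_val_one, Matrix.head_cons,
      Matrix.cons_val_two, Matrix.tail_cons, Matrix.cons_val_three, Matrix.cons_val_four]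
    refine Prod.ext ?_ (Prod.ext ?_ (Prod.ext ?_ (Prod.ext ?_ (Prod.ext ?_ ?_)))) <;> simp <;> ring
  right_inv x := by
    obtain ⟨⟨b, hb⟩, ⟨p, hp, hs⟩⟩ := x
    have hs6 : p 0 + p 1 + p 2 + p 3 + p 4 + p 5 = 0 := by rw [← sum6]; exact hs
    refine Prod.ext (Subtype.ext rfl) (Subtype.ext ?_)
    funext i
    fin_cases i
    · show -(b - p 0) + b = p 0; ring
    · show (b - p 0) - (2*b - p 0 - p 1) + b = p 1; ring
    · show (2*b - p 0 - p 1) - (3*b - p 0 - p 1 - p 2) + b = p 2; ring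
    · show (3*b - p 0 - p 1 - p 2) - (2*b - p 0 - p 1 - p 2 - p 3) - b = p 3; ring
    · show (2*b - p 0 - p 1 - p 2 - p 3) - (b - p 0 - p 1 - p 2 - p 3 - p 4) - b = p 4; ring
    · show (b - p 0 - p 1 - p 2 - p 3 - p 4) - b = p 5; omega


end E6aux

theorem E6_bulk (n : ℕ) :
    E6b n = (2 * n + 1) * Akb 5 n ∧
    5 * E6b n = (2 * n + 1) ^ 2 *
      (5 + 27 * n + 71 * n ^ 2 + 88 * n ^ 3 + 44 * n ^ 4) := by
  have h1 : E6b n = (2 * n + 1) * Akb 5 n := by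
    rw [E6b, Nat.card_congr (E6equiv n), Nat.card_prod]
    congr 1
    · rw [Nat.card_congr (Equiv.subtypeEquivRight
        (q := fun x => x ∈ Finset.Icc (-(n:ℤ)) (n:ℤ)) fun x => by simp [Finset.mem_Icc, abs_le])]
      rw [Nat.card_eq_finsetCard, Int.card_Icc]
      omega
  have h2 := Akb_poly n
  have h3 : 5 * Akb 5 n = (2*n+1) * (5 + 27*n + 71*n^2 + 88*n^3 + 44*n^4) := by
    have h48 : (48:ℤ) * (5 * (Akb 5 n : ℤ))
        = 48 * ((2*(n:ℤ)+1) * (5 + 27*(n:ℤ) + 71*(n:ℤ)^2 + 88*(n:ℤ)^3 + 44*(n:ℤ)^4)) := by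
      linear_combination h2
    have h5 := mul_left_cancel₀ (by norm_num : (48:ℤ) ≠ 0) h48
    exact_mod_cast h5
  refine ⟨h1, ?_⟩
  calc 5 * E6b n = (2*n+1) * (5 * Akb 5 n) := by rw [h1]; ring
    _ = (2*n+1) * ((2*n+1) * (5 + 27*n + 71*n^2 + 88*n^3 + 44*n^4)) := by rw [h3]
    _ = (2*n+1)^2 * (5 + 27*n + 71*n^2 + 88*n^3 + 44*n^4) := by ring
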